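/- The symplectic matrices with invertible upper-left d×d block are dense in the set of all 2d×2d real symplectic matrices: for every symplectic H there exists a sequence of symplectic matrices H_n with invertible upper-left block converging to H. -/
import Mathlib


open Matrix
open Polynomial

def Jmat (d : ℕ) : Matrix (Fin d ⊕ Fin d) (Fin d ⊕ Fin d) ℝ :=
  Matrix.fromBlocks 0 1 (-1) 0

def IsSymplectic {d : ℕ} (H : Matrix (Fin d ⊕ Fin d) (Fin d ⊕ Fin d) ℝ) : Prop :=
  Hᵀ * Jmat d * H = Jmat d

namespace Stmt17Aux
variable {d : ℕ}

def Nmat (d : ℕ) (s : ℝ) : Matrix (Fin d ⊕ Fin d) (Fin d ⊕ Fin d) ℝ :=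
  fromBlocks 1 (s • 1) 0 1

lemma Nmat_symplectic (s : ℝ) : IsSymplectic (Nmat d s) := by
  unfold IsSymplectic Nmat Jmat
  simp [fromBlocks_transpose, fromBlocks_multiply]

lemma symplectic_mul {M H : Matrix (Fin d ⊕ Fin d) (Fin d ⊕ Fin d) ℝ}
    (hM : IsSymplectic M) (hH : IsSymplectic H) : IsSymplectic (M * H) := by
  unfold IsSymplectic at *
  calc (M * H)ᵀ * Jmat d * (M * H) = Hᵀ * (Mᵀ * Jmat d * M) * H := by
        rw [transpose_mul]; noncomm_ring
    _ = Jmat d := by rw [hM, hH]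

end Stmt17Aux

namespace Stmt17Aux
variable {d : ℕ} {H : Matrix (Fin d ⊕ Fin d) (Fin d ⊕ Fin d) ℝ}

lemma block_symm (h : IsSymplectic H) :
    (H.toBlocks₁₁)ᵀ * H.toBlocks₂₁ = (H.toBlocks₂₁)ᵀ * H.toBlocks₁₁ := by
  have hH := h
  unfold IsSymplectic Jmat at hH
  rw [← fromBlocks_toBlocks H] at hH
  rw [fromBlocks_transpose, fromBlocks_multiply, fromBlocks_multiply] at hH
  have := congrArg Matrix.toBlocks₁₁ hH
  simp [toBlocks_fromBlocks₁₁] at this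
  linear_combination (norm := noncomm_ring) this

lemma det_ne_zero (h : IsSymplectic H) : H.det ≠ 0 := by
  have hJ : (Jmat d).det * (Jmat d)ᵀ.det = 1 := by
    rw [← det_mul]
    have : Jmat d * (Jmat d)ᵀ = 1 := by
      unfold Jmat
      simp [fromBlocks_transpose, fromBlocks_multiply]
    rw [this, det_one]
  have hJ0 : (Jmat d).det ≠ 0 := left_ne_zero_of_mul_eq_one hJ
  have := congrArg Matrix.det h
  rw [det_mul, det_mul, det_transpose] at this
  intro h0
  rw [h0] at this
  simp at this
  exact hJ0 this.symm

lemma kernel_triv (h : IsSymplectic H) (x : Fin d → ℝ)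
    (hA : H.toBlocks₁₁ *ᵥ x = 0) (hC : H.toBlocks₂₁ *ᵥ x = 0) : x = 0 := by
  have hinj : Function.Injective (H.mulVec) :=
    mulVec_injective_iff_isUnit.mpr ((isUnit_iff_isUnit_det H).mpr (isUnit_iff_ne_zero.mpr (det_ne_zero h)))
  have : H *ᵥ (Sum.elim x 0) = 0 := by
    rw [← fromBlocks_toBlocks H, fromBlocks_mulVec]
    simp [hA, hC]
  have h0 : Sum.elim x (0 : Fin d → ℝ) = 0 := by
    apply hinj
    simpa using this
  funext i
  exact congrFun h0 (Sum.inl i)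

end Stmt17Aux

namespace Stmt17Aux
variable {d : ℕ}

lemma dot_shift (M : Matrix (Fin d) (Fin d) ℝ) (x y : Fin d → ℝ) :
    (M *ᵥ x) ⬝ᵥ y = x ⬝ᵥ (Mᵀ *ᵥ y) := by
  rw [dotProduct_mulVec, vecMul_transpose]

lemma dot_self_nonneg (x : Fin d → ℝ) : 0 ≤ x ⬝ᵥ x :=
  Finset.sum_nonneg fun i _ => mul_self_nonneg (x i)

lemma detC_ne_zero (A C : Matrix (Fin d) (Fin d) ℝ)
    (hsym : Aᵀ * C = Cᵀ * A)
    (hker : ∀ x : Fin d → ℝ, A *ᵥ x = 0 → C *ᵥ x = 0 → x = 0) :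
    (A.map (Complex.ofReal ·) + Complex.I • C.map (Complex.ofReal ·)).det ≠ 0 := by
  intro hdet
  obtain ⟨v, hv0, hv⟩ := (Matrix.exists_mulVec_eq_zero_iff).mpr hdet
  set u : Fin d → ℝ := fun j => (v j).re with hu
  set w : Fin d → ℝ := fun j => (v j).im with hw
  have heq : ∀ k, (A.map (Complex.ofReal ·) *ᵥ v) k + Complex.I * (C.map (Complex.ofReal ·) *ᵥ v) k = 0 := by
    intro k
    have := congrFun hv k
    rw [add_mulVec, smul_mulVec] at this
    simpa using this
  have hre : A *ᵥ u = C *ᵥ w := by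
    funext k
    have := congrArg Complex.re (heq k)
    simp [mulVec, dotProduct, Complex.mul_re, Matrix.map_apply, Complex.re_sum,
      Complex.im_sum, Finset.sum_sub_distrib, hu, hw] at this
    show (A *ᵥ u) k = (C *ᵥ w) k
    simp [mulVec, dotProduct, hu, hw]
    linarith [this]
  have him : A *ᵥ w = -(C *ᵥ u) := by
    funext k
    have := congrArg Complex.im (heq k)
    simp [mulVec, dotProduct, Complex.mul_im, Matrix.map_apply, Complex.re_sum,
      Complex.im_sum, hu, hw] at this
    show (A *ᵥ w) k = -((C *ᵥ u) k)
    simp [mulVec, dotProduct, hu, hw]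
    linarith [this]
  have key : (A *ᵥ u) ⬝ᵥ (A *ᵥ u) + (C *ᵥ u) ⬝ᵥ (C *ᵥ u) = 0 := by
    have t : (A *ᵥ u) ⬝ᵥ (C *ᵥ w) = (C *ᵥ u) ⬝ᵥ (A *ᵥ w) := by
      rw [dot_shift A u, dot_shift C u, mulVec_mulVec, mulVec_mulVec, hsym]
    calc (A *ᵥ u) ⬝ᵥ (A *ᵥ u) + (C *ᵥ u) ⬝ᵥ (C *ᵥ u)
        = (A *ᵥ u) ⬝ᵥ (C *ᵥ w) + (C *ᵥ u) ⬝ᵥ (C *ᵥ u) := by rw [← hre]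
      _ = (C *ᵥ u) ⬝ᵥ (A *ᵥ w) + (C *ᵥ u) ⬝ᵥ (C *ᵥ u) := by rw [t]
      _ = (C *ᵥ u) ⬝ᵥ (-(C *ᵥ u)) + (C *ᵥ u) ⬝ᵥ (C *ᵥ u) := by rw [him]
      _ = 0 := by rw [dotProduct_neg]; ring
  have hu0 : u = 0 := by
    apply hker
    · rw [← dotProduct_self_eq_zero]
      have := dot_self_nonneg (A *ᵥ u)
      have := dot_self_nonneg (C *ᵥ u)
      linarith
    · rw [← dotProduct_self_eq_zero]
      have := dot_self_nonneg (A *ᵥ u)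
      have := dot_self_nonneg (C *ᵥ u)
      linarith
  have hw0 : w = 0 := by
    apply hker
    · rw [him, hu0]; simp
    · rw [← hre, hu0]; simp
  apply hv0
  funext j
  have h1 : (v j).re = 0 := congrFun hu0 j
  have h2 : (v j).im = 0 := congrFun hw0 j
  simp [Complex.ext_iff, h1, h2]

end Stmt17Aux

namespace Stmt17Aux
variable {d : ℕ}

lemma exists_good_seq (A C : Matrix (Fin d) (Fin d) ℝ)
    (hdet : (A.map (Complex.ofReal ·) + Complex.I • C.map (Complex.ofReal ·)).det ≠ 0) :
    ∃ s : ℕ → ℝ, Filter.Tendsto s Filter.atTop (nhds 0) ∧ ∀ n, (A + s n • C).det ≠ 0 := by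
  set p : Polynomial ℂ :=
    (A.map (fun x => Polynomial.C (x:ℂ)) + (Polynomial.X : Polynomial ℂ) • C.map (fun x => Polynomial.C (x:ℂ))).det with hp
  have heval : ∀ z : ℂ, p.eval z = (A.map (Complex.ofReal ·) + z • C.map (Complex.ofReal ·)).det := by
    intro z
    rw [hp, ← Polynomial.coe_evalRingHom, RingHom.map_det]
    congr 1
    ext i j
    simp only [RingHom.mapMatrix_apply, Matrix.map_apply, Matrix.add_apply, Matrix.smul_apply,
      smul_eq_mul, Polynomial.coe_evalRingHom, Polynomial.eval_add, Polynomial.eval_mul,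
      Polynomial.eval_C, Polynomial.eval_X, Matrix.map_add]
  have hp0 : p ≠ 0 := by
    intro h0
    apply hdet
    rw [← heval, h0]
    exact Polynomial.eval_zero
  have hbad : {s : ℝ | p.eval (s:ℂ) = 0}.Finite :=
    (Polynomial.finite_setOf_isRoot hp0).preimage Complex.ofReal_injective.injOn
  have hne : ∀ n : ℕ, (Set.Ioo (0:ℝ) (1/(n+1)) \ {s : ℝ | p.eval (s:ℂ) = 0}).Nonempty := by
    intro n
    exact ((Set.Ioo_infinite (by positivity)).diff hbad).nonempty
  choose s hs using hne
  refine ⟨s, ?_, ?_⟩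
  · refine tendsto_of_tendsto_of_tendsto_of_le_of_le tendsto_const_nhds
      tendsto_one_div_add_atTop_nhds_zero_nat
      (fun n => le_of_lt ((hs n).1).1) (fun n => le_of_lt ((hs n).1).2)
  · intro n h0
    apply (hs n).2
    show p.eval ((s n : ℝ) : ℂ) = 0
    have : p.eval ((s n : ℝ) : ℂ) = Complex.ofRealHom ((A + s n • C).det) := by
      rw [RingHom.map_det, heval]
      congr 1
      ext i j
      simp [Matrix.map_apply]
    rw [this, h0]
    simp

end Stmt17Aux

theorem stmt17 (d : ℕ) (H : Matrix (Fin d ⊕ Fin d) (Fin d ⊕ Fin d) ℝ)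
    (h : IsSymplectic H) :
    ∃ f : ℕ → Matrix (Fin d ⊕ Fin d) (Fin d ⊕ Fin d) ℝ,
      (∀ n, IsSymplectic (f n) ∧ IsUnit ((f n).toBlocks₁₁)) ∧
      Filter.Tendsto f Filter.atTop (nhds H) := by
  classical
  obtain ⟨s, hst, hsd⟩ := Stmt17Aux.exists_good_seq H.toBlocks₁₁ H.toBlocks₂₁
    (Stmt17Aux.detC_ne_zero _ _ (Stmt17Aux.block_symm h) (fun x => Stmt17Aux.kernel_triv h x))
  refine ⟨fun n => Stmt17Aux.Nmat d (s n) * H,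
    fun n => ⟨Stmt17Aux.symplectic_mul (Stmt17Aux.Nmat_symplectic _) h, ?_⟩, ?_⟩
  · have hb : (Stmt17Aux.Nmat d (s n) * H).toBlocks₁₁ = H.toBlocks₁₁ + s n • H.toBlocks₂₁ := by
      conv_lhs => rw [← fromBlocks_toBlocks H]
      unfold Stmt17Aux.Nmat
      rw [fromBlocks_multiply]
      simp [toBlocks_fromBlocks₁₁, Matrix.smul_mul]
    rw [hb]
    exact (isUnit_iff_isUnit_det _).mpr (isUnit_iff_ne_zero.mpr (hsd n))
  · have hrepr : ∀ t : ℝ, Stmt17Aux.Nmat d t * H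
        = H + t • ((fromBlocks 0 1 0 0 : Matrix (Fin d ⊕ Fin d) (Fin d ⊕ Fin d) ℝ) * H) := by
      intro t
      have hN : Stmt17Aux.Nmat d t
          = 1 + t • (fromBlocks 0 1 0 0 : Matrix (Fin d ⊕ Fin d) (Fin d ⊕ Fin d) ℝ) := by
        unfold Stmt17Aux.Nmat
        rw [Matrix.fromBlocks_smul, ← Matrix.fromBlocks_one, Matrix.fromBlocks_add]
        simp
      rw [hN, add_mul, one_mul, smul_mul_assoc]
    have : (fun n => Stmt17Aux.Nmat d (s n) * H)
        = fun n => H + s n • ((fromBlocks 0 1 0 0 : Matrix (Fin d ⊕ Fin d) (Fin d ⊕ Fin d) ℝ) * H) :=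
      funext fun n => hrepr (s n)
    rw [this]
    simpa using tendsto_const_nhds.add
      (hst.smul_const ((fromBlocks 0 1 0 0 : Matrix (Fin d ⊕ Fin d) (Fin d ⊕ Fin d) ℝ) * H))
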